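/- The score of a named hand is at most 4, and a hand with score 4 contains no bad spades; hence a hand of score 4 is fixed by both Shape Up and Ship Out. -/

import Mathlib

open Finset

variable {A B : Type*}

/-- The spots of a hand holding a spade (suit `3`). -/
def spadeSpots (h : Fin 4 → B × Fin 4) : Finset (Fin 4) :=
  Finset.univ.filter (fun i => (h i).2 = 3)

/-- Shape Up: swap spot `0` with the least spot holding a spade, if any. -/
def shapeUp (h : Fin 4 → B × Fin 4) : Fin 4 → B × Fin 4 :=
  if hs : (spadeSpots h).Nonempty then h ∘ (Equiv.swap 0 ((spadeSpots h).min' hs)) else h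

/-- Bad spades: spades lying in a spot other than the leftmost spot `0`. -/
def badSpades (h : Fin 4 → B × Fin 4) : Finset (Fin 4) :=
  Finset.univ.filter (fun i => i ≠ 0 ∧ (h i).2 = 3)

/-- The spot of the leftmost bad spade (junk value `0` if there is none). -/
def leftBad (h : Fin 4 → B × Fin 4) : Fin 4 :=
  if hb : (badSpades h).Nonempty then (badSpades h).min' hb else 0

/-- The card a player with a bad spade calls for: its name is the name of the hand
(the name of the leftmost spade, in spot `0`), and its suit is the suit `3 - i`
named by the spot `i` of the leftmost bad spade. -/
def request (h : Fin 4 → B × Fin 4) : B × Fin 4 :=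
  ((h 0).1, 3 - leftBad h)

/-- Ship Out, seen from one hand: replace the leftmost bad spade by the requested card. -/
def shipOutHand (h : Fin 4 → B × Fin 4) : Fin 4 → B × Fin 4 :=
  if (badSpades h).Nonempty then Function.update h (leftBad h) (request h) else h

/-- The hand of player `a` under the global assignment `f`. -/
def hand (f : A × Fin 4 → B × Fin 4) (a : A) : Fin 4 → B × Fin 4 :=
  fun i => f (a, i)

/-- The global Shape Up round: every player shapes up simultaneously. -/
def gShapeUp (f : A × Fin 4 → B × Fin 4) : A × Fin 4 → B × Fin 4 :=
  fun p => shapeUp (hand f p.1) p.2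

/-- A player is active in the Ship Out round if her hand is named
(spade in spot `0`) and contains a bad spade. -/
def isActive (f : A × Fin 4 → B × Fin 4) (a : A) : Prop :=
  (f (a, 0)).2 = 3 ∧ (badSpades (hand f a)).Nonempty

open Classical in
/-- The global Ship Out round: every active player swaps her leftmost bad spade
with the card she calls for, wherever that card is. -/
noncomputable def gShipOut (f : A × Fin 4 → B × Fin 4) : A × Fin 4 → B × Fin 4 :=
  fun p =>
    if isActive f p.1 ∧ p.2 = leftBad (hand f p.1) then request (hand f p.1)
    else if h : ∃ a', isActive f a' ∧ request (hand f a') = f p then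
      f (h.choose, leftBad (hand f h.choose))
    else f p

/-- The game: alternate Shape Up and Ship Out rounds, starting with Shape Up. -/
noncomputable def gameSeq (f : A × Fin 4 → B × Fin 4) : ℕ → (A × Fin 4 → B × Fin 4)
  | 0 => f
  | (k + 1) => if k % 2 = 0 then gShapeUp (gameSeq f k) else gShipOut (gameSeq f k)

open Classical in
/-- The score of a hand: the number of spots `i` holding the card whose name is the
name of the hand and whose suit `3 - i` is the suit named by spot `i`. -/
noncomputable def score (h : Fin 4 → B × Fin 4) : ℕ :=
  (Finset.univ.filter (fun i => h i = ((h 0).1, 3 - i))).card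

/-- The score of a named hand is at most `4`, and a hand of score `4` has no bad
spades, hence is fixed by both Shape Up and Ship Out. -/
theorem score_le_four (h : Fin 4 → B × Fin 4) (hn : (h 0).2 = 3) :
    score h ≤ 4 ∧
      (score h = 4 → badSpades h = ∅ ∧ shapeUp h = h ∧ shipOutHand h = h) := by
  classical
  constructor
  · calc score h ≤ (Finset.univ : Finset (Fin 4)).card := Finset.card_filter_le _ _
      _ = 4 := by simp
  · intro h4
    have hall : ∀ i, h i = ((h 0).1, 3 - i) := by
      have : (Finset.univ.filter (fun i => h i = ((h 0).1, 3 - i))) =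
          (Finset.univ : Finset (Fin 4)) := by
        apply Finset.eq_univ_of_card
        simpa [Finset.card_univ, score] using h4
      intro i
      have := Finset.mem_filter.mp (this ▸ Finset.mem_univ i)
      exact this.2
    have hsuit : ∀ i : Fin 4, (h i).2 = 3 - i := fun i => by rw [hall i]
    have hbad : badSpades h = ∅ := by
      ext i
      simp only [badSpades, Finset.mem_filter, Finset.mem_univ, true_and,
        Finset.notMem_empty, iff_false, not_and]
      intro hi0
      rw [hsuit i]
      intro hc
      apply hi0
      fin_cases i <;> revert hc <;> decide
    refine ⟨hbad, ?_, ?_⟩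
    · have hspade : spadeSpots h = {0} := by
        ext i
        simp only [spadeSpots, Finset.mem_filter, Finset.mem_univ, true_and,
          Finset.mem_singleton, hsuit i]
        constructor
        · intro hc; fin_cases i <;> revert hc <;> decide
        · rintro rfl; rfl
      unfold shapeUp
      rw [hspade]
      simp
    · unfold shipOutHand
      rw [hbad]
      simp
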